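/- arXiv:1108.2991 — 7 statements merged into one kernel-verified Lean document; each statement's English description precedes it below -/
import Mathlib

section
/- Let a and b be positive integers and let g = gcd(a,b). Then S_{a,b} = (3a²b + 3ab² + a² − 3ab + b² − 6abg + g²)/(12a) − (b/a)·S_{b,a}. Equivalently, a·S_{a,b} + b·S_{b,a} = (3a²b + 3ab² + a² − 3ab + b² − 6abg + g²)/12. -/
/-- For integers `a ≥ 0`, `b ≥ 1`, `S a b = Σ_{i=0}^{b-1} (i/b)·(a·i mod b)` as a rational. -/
noncomputable def Sab (a b : ℕ) : ℚ :=
  ∑ i ∈ Finset.range b, (i : ℚ) / (b : ℚ) * ((a * i % b : ℕ) : ℚ)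

open Finset


lemma sumId (n : ℕ) : ∑ i ∈ range n, (i:ℚ) = n*(n-1)/2 := by
  induction n with
  | zero => simp
  | succ n ih => rw [Finset.sum_range_succ, ih]; push_cast; ring

lemma sumSq (n : ℕ) : ∑ i ∈ range n, (i:ℚ)^2 = n*(n-1)*(2*n-1)/6 := by
  induction n with
  | zero => simp
  | succ n ih => rw [Finset.sum_range_succ, ih]; push_cast; ring

lemma sumRangeAdd (f : ℕ → ℚ) (m n : ℕ) :
    ∑ i ∈ range (m+n), f i = ∑ i ∈ range m, f i + ∑ i ∈ range n, f (m+i) := by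
  induction n with
  | zero => simp
  | succ n ih =>
      rw [Nat.add_succ, Finset.sum_range_succ, ih, Finset.sum_range_succ, add_assoc]

lemma sumRangeMul (f : ℕ → ℚ) (s t : ℕ) :
    ∑ i ∈ range (s*t), f i = ∑ v ∈ range s, ∑ u ∈ range t, f (v*t+u) := by
  induction s with
  | zero => simp
  | succ s ih =>
      rw [Nat.succ_mul, sumRangeAdd, ih, Finset.sum_range_succ]


lemma coprimePerm (a₁ b₁ : ℕ) (hb₁ : 0 < b₁) (h : Nat.Coprime a₁ b₁) (F : ℕ → ℚ) :
    ∑ u ∈ range b₁, F (a₁*u % b₁) = ∑ k ∈ range b₁, F k := by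
  set c := a₁ ^ (Nat.totient b₁ - 1) with hc
  have hmul : a₁ * c ≡ 1 [MOD b₁] := by
    have h1 : a₁ ^ b₁.totient ≡ 1 [MOD b₁] := Nat.ModEq.pow_totient h
    have ht : 0 < b₁.totient := Nat.totient_pos.2 hb₁
    have : a₁ * c = a₁ ^ b₁.totient := by
      rw [hc, ← pow_succ']
      congr 1
      omega
    rwa [this]
  refine Finset.sum_nbij' (fun u => a₁*u % b₁) (fun k => c*k % b₁) ?_ ?_ ?_ ?_ ?_
  · intro u hu; exact mem_range.2 (Nat.mod_lt _ hb₁)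
  · intro k hk; exact mem_range.2 (Nat.mod_lt _ hb₁)
  · intro u hu
    have hu' : u < b₁ := mem_range.1 hu
    have h1 : c * (a₁*u % b₁) ≡ u [MOD b₁] := by
      calc c * (a₁*u % b₁) ≡ c * (a₁*u) [MOD b₁] :=
            Nat.ModEq.mul_left c (Nat.mod_modEq (a₁*u) b₁)
        _ = (a₁ * c) * u := by ring
        _ ≡ 1 * u [MOD b₁] := Nat.ModEq.mul_right u hmul
        _ = u := by ring
    simpa [Nat.ModEq, Nat.mod_eq_of_lt hu'] using h1
  · intro k hk
    have hk' : k < b₁ := mem_range.1 hk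
    have h1 : a₁ * (c*k % b₁) ≡ k [MOD b₁] := by
      calc a₁ * (c*k % b₁) ≡ a₁ * (c*k) [MOD b₁] :=
            Nat.ModEq.mul_left a₁ (Nat.mod_modEq (c*k) b₁)
        _ = (a₁ * c) * k := by ring
        _ ≡ 1 * k [MOD b₁] := Nat.ModEq.mul_right k hmul
        _ = k := by ring
    simpa [Nat.ModEq, Nat.mod_eq_of_lt hk'] using h1
  · intro u hu; rfl

lemma masterSum (g a₁ b₁ : ℕ) (hg : 0 < g) (hb₁ : 0 < b₁) (h : Nat.Coprime a₁ b₁)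
    (F : ℕ → ℚ) :
    ∑ i ∈ range (g*b₁), F ((g*a₁)*i % (g*b₁)) = (g:ℚ) * ∑ k ∈ range b₁, F (g*k) := by
  rw [sumRangeMul]
  have key : ∀ v ∈ range g, (∑ u ∈ range b₁, F ((g*a₁)*(v*b₁+u) % (g*b₁)))
      = ∑ k ∈ range b₁, F (g*k) := by
    intro v _
    have h1 : ∀ u, (g*a₁)*(v*b₁+u) % (g*b₁) = g * (a₁*u % b₁) := by
      intro u
      rw [show (g*a₁)*(v*b₁+u) = g*(a₁*u) + (a₁*v)*(g*b₁) by ring,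
        Nat.add_mul_mod_self_right, Nat.mul_mod_mul_left]
    simp only [h1]
    exact coprimePerm a₁ b₁ hb₁ h (fun k => F (g*k))
  rw [Finset.sum_congr rfl key, Finset.sum_const, card_range, nsmul_eq_mul]

/-- sum over i < g*b₁ of Q i on the divisible positions -/
lemma zSum (g a₁ b₁ : ℕ) (hg : 0 < g) (hb₁ : 0 < b₁) (h : Nat.Coprime a₁ b₁) :
    ∑ i ∈ range (g*b₁), (if (g*a₁)*i % (g*b₁) = 0 then (((g*a₁)*i/(g*b₁) : ℕ):ℚ) else 0)
      = (a₁:ℚ) * ((g:ℚ)*((g:ℚ)-1)/2) := by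
  rw [sumRangeMul]
  have hmod : ∀ v u, (g*a₁)*(v*b₁+u) % (g*b₁) = g * (a₁*u % b₁) := by
    intro v u
    rw [show (g*a₁)*(v*b₁+u) = g*(a₁*u) + (a₁*v)*(g*b₁) by ring,
      Nat.add_mul_mod_self_right, Nat.mul_mod_mul_left]
  have key : ∀ v ∈ range g,
      (∑ u ∈ range b₁, (if (g*a₁)*(v*b₁+u) % (g*b₁) = 0
          then (((g*a₁)*(v*b₁+u)/(g*b₁) : ℕ):ℚ) else 0)) = ((a₁:ℚ)*(v:ℚ)) := by
    intro v _
    obtain ⟨n, rfl⟩ : ∃ n, b₁ = n+1 := ⟨b₁-1, by omega⟩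
    rw [Finset.sum_range_succ']
    have hzero : ∀ u ∈ range n, (if (g*a₁)*(v*(n+1)+(u+1)) % (g*(n+1)) = 0
        then (((g*a₁)*(v*(n+1)+(u+1))/(g*(n+1)) : ℕ):ℚ) else 0) = 0 := by
      intro u hu
      have hu' : u < n := mem_range.1 hu
      rw [if_neg]
      rw [hmod]
      intro hc
      have h0 : a₁*(u+1) % (n+1) = 0 :=
        (Nat.mul_eq_zero.1 hc).resolve_left (by omega)
      have hdvd : (n+1) ∣ (u+1) := by
        have : (n+1) ∣ a₁*(u+1) := Nat.dvd_of_mod_eq_zero h0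
        exact (Nat.Coprime.dvd_of_dvd_mul_left (h.symm) this)
      have := Nat.le_of_dvd (by omega) hdvd
      omega
    rw [Finset.sum_congr rfl hzero]
    simp only [Finset.sum_const_zero, zero_add]
    have hc0 : (g*a₁)*(v*(n+1)+0) % (g*(n+1)) = 0 := by
      rw [hmod]; simp
    rw [if_pos hc0]
    have hdiv : (g*a₁)*(v*(n+1)+0)/(g*(n+1)) = a₁*v := by
      rw [show (g*a₁)*(v*(n+1)+0) = (a₁*v)*(g*(n+1)) by ring]
      exact Nat.mul_div_cancel _ (by positivity)
    rw [hdiv]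
    push_cast; ring
  rw [Finset.sum_congr rfl key, ← Finset.mul_sum, sumId]

lemma peel (b : ℕ) (hb : 0 < b) (G : ℕ → ℚ) :
    ∑ i ∈ range b, (if 1 ≤ i then G i else 0) = (∑ i ∈ range b, G i) - G 0 := by
  obtain ⟨n, rfl⟩ : ∃ n, b = n+1 := ⟨b-1, by omega⟩
  rw [Finset.sum_range_succ', Finset.sum_range_succ' G n]
  simp

/-- the ceiling ⌈a i / b⌉ -/
def Kq (a b i : ℕ) : ℕ := a*i/b + (if a*i % b = 0 then 0 else 1)

lemma Kle (a b i : ℕ) (ha : 0 < a) (hb : 0 < b) (hib : i < b) : Kq a b i ≤ a := by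
  have hq : a*i/b < a := (Nat.div_lt_iff_lt_mul hb).2 ((Nat.mul_lt_mul_left ha).2 hib)
  unfold Kq
  split <;> omega

lemma Kcond (a b i j : ℕ) (hb : 0 < b) : a*i ≤ b*j ↔ Kq a b i ≤ j := by
  have hqr : b*(a*i/b) + a*i % b = a*i := Nat.div_add_mod _ _
  have hrb : a*i % b < b := Nat.mod_lt _ hb
  unfold Kq
  by_cases hr : a*i % b = 0
  · simp only [hr, if_pos, add_zero]
    constructor
    · intro hle
      have : b*(a*i/b) ≤ b*j := by omega
      exact Nat.le_of_mul_le_mul_left this hb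
    · intro hle
      have : b*(a*i/b) ≤ b*j := Nat.mul_le_mul_left b hle
      omega
  · rw [if_neg hr]
    constructor
    · intro hle
      have h1 : b*(a*i/b) < b*j := by omega
      have := Nat.lt_of_mul_lt_mul_left h1
      omega
    · intro hle
      have : b*(a*i/b + 1) ≤ b*j := Nat.mul_le_mul_left b hle
      have h2 : b*(a*i/b + 1) = b*(a*i/b) + b := by ring
      omega

lemma innerSum (a b i : ℕ) (ha : 0 < a) (hb : 0 < b) (hib : i < b) :
    ∑ j ∈ range a, (if a*i ≤ b*j then (j:ℚ) else 0)
      = (a:ℚ)*((a:ℚ)-1)/2 - ((Kq a b i : ℕ):ℚ)*(((Kq a b i : ℕ):ℚ)-1)/2 := by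
  have hKa : Kq a b i ≤ a := Kle a b i ha hb hib
  have hsplit : ∀ j ∈ range a, (if a*i ≤ b*j then (j:ℚ) else 0)
      = (j:ℚ) - (if j < Kq a b i then (j:ℚ) else 0) := by
    intro j _
    rcases le_or_gt (Kq a b i) j with hle | hlt
    · rw [if_pos ((Kcond a b i j hb).2 hle), if_neg (by omega)]; ring
    · rw [if_neg (fun hc => absurd ((Kcond a b i j hb).1 hc) (by omega)), if_pos hlt]; ring
  rw [Finset.sum_congr rfl hsplit, Finset.sum_sub_distrib, sumId]
  congr 1
  have h1 : ∑ j ∈ range (Kq a b i), (if j < Kq a b i then (j:ℚ) else 0)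
      = ∑ j ∈ range a, (if j < Kq a b i then (j:ℚ) else 0) :=
    Finset.sum_subset (Finset.range_subset_range.2 hKa)
      (fun x _ hnx => if_neg (by simpa using hnx))
  rw [← h1, Finset.sum_congr rfl (fun j hj => if_pos (mem_range.1 hj)), sumId]

lemma swapL (a b : ℕ) (ha : 0 < a) (hb : 0 < b) :
    ∑ j ∈ range a, (j:ℚ)*((b*j/a : ℕ):ℚ)
      = ((b:ℚ)-1)*((a:ℚ)*((a:ℚ)-1)/2)
        - ∑ i ∈ range b, ((Kq a b i : ℕ):ℚ)*(((Kq a b i : ℕ):ℚ)-1)/2 := by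
  have hcard : ∀ j ∈ range a, ((b*j/a : ℕ):ℚ)
      = ∑ i ∈ range b, (if 1 ≤ i ∧ a*i ≤ b*j then (1:ℚ) else 0) := by
    intro j hj
    have hj' : j < a := mem_range.1 hj
    rw [Finset.sum_boole]
    have hfil : (range b).filter (fun i => 1 ≤ i ∧ a*i ≤ b*j) = Finset.Icc 1 (b*j/a) := by
      ext i
      simp only [mem_filter, mem_range, Finset.mem_Icc]
      constructor
      · rintro ⟨_, h1, h2⟩
        exact ⟨h1, (Nat.le_div_iff_mul_le ha).2 (by rwa [mul_comm] at h2)⟩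
      · rintro ⟨h1, h2⟩
        have hlt : b*j/a < b := (Nat.div_lt_iff_lt_mul ha).2
          (by exact (Nat.mul_lt_mul_left hb).2 hj')
        refine ⟨by omega, h1, ?_⟩
        have := (Nat.le_div_iff_mul_le ha).1 h2
        rwa [mul_comm] at this
    rw [hfil, Nat.card_Icc]
    norm_num
  calc ∑ j ∈ range a, (j:ℚ)*((b*j/a : ℕ):ℚ)
      = ∑ j ∈ range a, ∑ i ∈ range b, (if 1 ≤ i ∧ a*i ≤ b*j then (j:ℚ) else 0) := by
        refine Finset.sum_congr rfl (fun j hj => ?_)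
        rw [hcard j hj, Finset.mul_sum]
        exact Finset.sum_congr rfl (fun i _ => by rw [mul_ite, mul_one, mul_zero])
    _ = ∑ i ∈ range b, ∑ j ∈ range a, (if 1 ≤ i ∧ a*i ≤ b*j then (j:ℚ) else 0) :=
        Finset.sum_comm
    _ = ∑ i ∈ range b, (if 1 ≤ i then
          ((a:ℚ)*((a:ℚ)-1)/2 - ((Kq a b i : ℕ):ℚ)*(((Kq a b i : ℕ):ℚ)-1)/2) else 0) := by
        refine Finset.sum_congr rfl (fun i hi => ?_)
        by_cases h1 : 1 ≤ i
        · rw [if_pos h1, ← innerSum a b i ha hb (mem_range.1 hi)]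
          exact Finset.sum_congr rfl (fun j _ => by simp [h1])
        · rw [if_neg h1]
          exact Finset.sum_eq_zero (fun j _ => by simp [h1])
    _ = (∑ i ∈ range b, ((a:ℚ)*((a:ℚ)-1)/2 - ((Kq a b i : ℕ):ℚ)*(((Kq a b i : ℕ):ℚ)-1)/2))
          - ((a:ℚ)*((a:ℚ)-1)/2 - ((Kq a b 0 : ℕ):ℚ)*(((Kq a b 0 : ℕ):ℚ)-1)/2) :=
        peel b hb _
    _ = ((b:ℚ)-1)*((a:ℚ)*((a:ℚ)-1)/2)
        - ∑ i ∈ range b, ((Kq a b i : ℕ):ℚ)*(((Kq a b i : ℕ):ℚ)-1)/2 := by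
        have hK0 : Kq a b 0 = 0 := by simp [Kq]
        rw [Finset.sum_sub_distrib, Finset.sum_const, card_range, nsmul_eq_mul, hK0]
        push_cast
        ring

theorem stmt0 (a b : ℕ) (ha : 0 < a) (hb : 0 < b) :
    Sab a b
      = (3 * (a : ℚ) ^ 2 * b + 3 * a * b ^ 2 + a ^ 2 - 3 * a * b + b ^ 2
          - 6 * a * b * (Nat.gcd a b : ℚ) + (Nat.gcd a b : ℚ) ^ 2) / (12 * a)
        - ((b : ℚ) / a) * Sab b a := by
  have ha0 : (a:ℚ) ≠ 0 := Nat.cast_ne_zero.2 ha.ne'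
  have hb0 : (b:ℚ) ≠ 0 := Nat.cast_ne_zero.2 hb.ne'
  set g := Nat.gcd a b with hgdef
  have hg : 0 < g := Nat.gcd_pos_of_pos_left b ha
  obtain ⟨a₁, ha₁⟩ : ∃ c, a = g * c := ⟨a / g, (Nat.mul_div_cancel' (Nat.gcd_dvd_left a b)).symm⟩
  obtain ⟨b₁, hb₁⟩ : ∃ c, b = g * c := ⟨b / g, (Nat.mul_div_cancel' (Nat.gcd_dvd_right a b)).symm⟩
  have ha₁' : a / g = a₁ := by rw [ha₁]; exact Nat.mul_div_cancel_left _ hg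
  have hb₁' : b / g = b₁ := by rw [hb₁]; exact Nat.mul_div_cancel_left _ hg
  have hcop : Nat.Coprime a₁ b₁ := by
    have h2 : 0 < Nat.gcd a b := hg
    have h3 := Nat.coprime_div_gcd_div_gcd h2
    rwa [show a / Nat.gcd a b = a₁ from ha₁', show b / Nat.gcd a b = b₁ from hb₁'] at h3
  have hb₁pos : 0 < b₁ := by
    rcases Nat.eq_zero_or_pos b₁ with h | h
    · rw [h, mul_zero] at hb₁; omega
    · exact h
  have hA : (a:ℚ) = (g:ℚ)*(a₁:ℚ) := by exact_mod_cast congrArg (fun n : ℕ => (n:ℚ)) ha₁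
  have hB : (b:ℚ) = (g:ℚ)*(b₁:ℚ) := by exact_mod_cast congrArg (fun n : ℕ => (n:ℚ)) hb₁
  -- pointwise division identities
  have hptwA : ∀ i : ℕ, (b:ℚ)*((a*i/b : ℕ):ℚ) + ((a*i % b : ℕ):ℚ) = (a:ℚ)*(i:ℚ) := by
    intro i
    exact_mod_cast congrArg (fun n : ℕ => (n:ℚ)) (Nat.div_add_mod (a*i) b)
  have hptwB : ∀ j : ℕ, (a:ℚ)*((b*j/a : ℕ):ℚ) + ((b*j % a : ℕ):ℚ) = (b:ℚ)*(j:ℚ) := by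
    intro j
    exact_mod_cast congrArg (fun n : ℕ => (n:ℚ)) (Nat.div_add_mod (b*j) a)
  -- E1
  have hE1 : (a:ℚ)*(b:ℚ)*Sab a b
      = (b:ℚ)*(∑ i ∈ range b, ((a*i/b : ℕ):ℚ)*((a*i % b : ℕ):ℚ))
        + (∑ i ∈ range b, ((a*i % b : ℕ):ℚ)^2) := by
    rw [Sab, Finset.mul_sum, Finset.mul_sum, ← Finset.sum_add_distrib]
    refine Finset.sum_congr rfl (fun i _ => ?_)
    have h := hptwA i
    field_simp
    linear_combination (-((a*i % b : ℕ):ℚ)) * h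
  -- E2
  have hE2 : (a:ℚ)*Sab b a
      = (b:ℚ)*((a:ℚ)*((a:ℚ)-1)*(2*(a:ℚ)-1)/6)
        - (a:ℚ)*(∑ j ∈ range a, (j:ℚ)*((b*j/a : ℕ):ℚ)) := by
    rw [Sab, Finset.mul_sum]
    have hstep : ∀ j ∈ range a, (a:ℚ)*((j:ℚ)/(a:ℚ)*((b*j % a : ℕ):ℚ))
        = (b:ℚ)*(j:ℚ)^2 - (a:ℚ)*((j:ℚ)*((b*j/a : ℕ):ℚ)) := by
      intro j _
      have h := hptwB j
      field_simp
      linear_combination (j:ℚ)*h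
    rw [Finset.sum_congr rfl hstep, Finset.sum_sub_distrib, ← Finset.mul_sum,
      ← Finset.mul_sum, sumSq]
  -- E5
  have hE5 : (b:ℚ)^2*(∑ i ∈ range b, ((a*i/b : ℕ):ℚ)^2)
      + 2*(b:ℚ)*(∑ i ∈ range b, ((a*i/b : ℕ):ℚ)*((a*i % b : ℕ):ℚ))
      + (∑ i ∈ range b, ((a*i % b : ℕ):ℚ)^2)
      = (a:ℚ)^2*((b:ℚ)*((b:ℚ)-1)*(2*(b:ℚ)-1)/6) := by
    rw [Finset.mul_sum, Finset.mul_sum, ← Finset.sum_add_distrib, ← Finset.sum_add_distrib]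
    have hstep : ∀ i ∈ range b, (b:ℚ)^2*((a*i/b : ℕ):ℚ)^2
        + 2*(b:ℚ)*(((a*i/b : ℕ):ℚ)*((a*i % b : ℕ):ℚ)) + ((a*i % b : ℕ):ℚ)^2
        = (a:ℚ)^2*(i:ℚ)^2 := by
      intro i _
      have h := hptwA i
      linear_combination ((b:ℚ)*((a*i/b : ℕ):ℚ) + ((a*i % b : ℕ):ℚ) + (a:ℚ)*(i:ℚ))*h
    rw [Finset.sum_congr rfl hstep, ← Finset.mul_sum, sumSq]
  -- E6
  have hE6 : (b:ℚ)*(∑ i ∈ range b, ((a*i/b : ℕ):ℚ)) + (∑ i ∈ range b, ((a*i % b : ℕ):ℚ))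
      = (a:ℚ)*((b:ℚ)*((b:ℚ)-1)/2) := by
    rw [Finset.mul_sum, ← Finset.sum_add_distrib]
    rw [Finset.sum_congr rfl (fun i _ => hptwA i), ← Finset.mul_sum, sumId]
  -- E4
  have hE4 : (∑ i ∈ range b, ((Kq a b i : ℕ):ℚ)*(((Kq a b i : ℕ):ℚ)-1)/2)
      = (∑ i ∈ range b, ((a*i/b : ℕ):ℚ)^2)/2 + (∑ i ∈ range b, ((a*i/b : ℕ):ℚ))/2
        - (∑ i ∈ range b, (if a*i % b = 0 then ((a*i/b : ℕ):ℚ) else 0)) := by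
    have hstep : ∀ i ∈ range b, ((Kq a b i : ℕ):ℚ)*(((Kq a b i : ℕ):ℚ)-1)/2
        = ((a*i/b : ℕ):ℚ)^2/2 + ((a*i/b : ℕ):ℚ)/2
          - (if a*i % b = 0 then ((a*i/b : ℕ):ℚ) else 0) := by
      intro i _
      by_cases hr : a*i % b = 0
      · simp only [Kq, hr, if_pos, add_zero, if_true]
        ring
      · simp only [Kq, if_neg hr]
        push_cast
        ring
    rw [Finset.sum_congr rfl hstep, Finset.sum_sub_distrib, Finset.sum_add_distrib,
      ← Finset.sum_div, ← Finset.sum_div]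
  -- swap
  have hSwapH := swapL a b ha hb
  -- values via gcd structure
  have hR1 : (∑ i ∈ range b, ((a*i % b : ℕ):ℚ)) = (b:ℚ)*((b:ℚ)-(g:ℚ))/2 := by
    rw [ha₁, hb₁, masterSum g a₁ b₁ hg hb₁pos hcop (fun n => (n:ℚ))]
    push_cast
    rw [← Finset.mul_sum, sumId]
    ring
  have hR2 : (∑ i ∈ range b, ((a*i % b : ℕ):ℚ)^2)
      = (b:ℚ)*((b:ℚ)-(g:ℚ))*(2*(b:ℚ)-(g:ℚ))/6 := by
    rw [ha₁, hb₁, masterSum g a₁ b₁ hg hb₁pos hcop (fun n => ((n:ℕ):ℚ)^2)]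
    push_cast
    simp only [mul_pow]
    rw [← Finset.mul_sum, sumSq]
    ring
  have hZ : (∑ i ∈ range b, (if a*i % b = 0 then ((a*i/b : ℕ):ℚ) else 0))
      = (a:ℚ)*((g:ℚ)-1)/2 := by
    rw [ha₁, hb₁, zSum g a₁ b₁ hg hb₁pos hcop]
    push_cast
    ring
  -- abbreviations
  set SQ2 := ∑ i ∈ range b, ((a*i/b : ℕ):ℚ)^2 with hSQ2def
  set SR2 := ∑ i ∈ range b, ((a*i % b : ℕ):ℚ)^2 with hSR2def
  set SR1 := ∑ i ∈ range b, ((a*i % b : ℕ):ℚ) with hSR1def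
  set SZ := ∑ i ∈ range b, (if a*i % b = 0 then ((a*i/b : ℕ):ℚ) else 0) with hSZdef
  -- assembly
  have k1 : 2*(a:ℚ)*(b:ℚ)*Sab a b
      = (a:ℚ)^2*((b:ℚ)*((b:ℚ)-1)*(2*(b:ℚ)-1)/6) + SR2 - (b:ℚ)^2*SQ2 := by
    linear_combination 2*hE1 + hE5
  have k2 : 2*(a:ℚ)*(b:ℚ)^2*Sab b a
      = 2*(b:ℚ)^3*((a:ℚ)*((a:ℚ)-1)*(2*(a:ℚ)-1)/6)
        - 2*(a:ℚ)*(b:ℚ)^2*((b:ℚ)-1)*((a:ℚ)*((a:ℚ)-1)/2)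
        + (a:ℚ)*(b:ℚ)^2*SQ2 + (a:ℚ)^2*(b:ℚ)*((b:ℚ)*((b:ℚ)-1)/2)
        - (a:ℚ)*(b:ℚ)*SR1 - 2*(a:ℚ)*(b:ℚ)^2*SZ := by
    linear_combination 2*(b:ℚ)^2*hE2 - 2*(a:ℚ)*(b:ℚ)^2*hSwapH
      + 2*(a:ℚ)*(b:ℚ)^2*hE4 + (a:ℚ)*(b:ℚ)*hE6
  have key : 2*(a:ℚ)^2*(b:ℚ)*Sab a b + 2*(a:ℚ)*(b:ℚ)^2*Sab b a
      = (a:ℚ)^3*((b:ℚ)*((b:ℚ)-1)*(2*(b:ℚ)-1)/6)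
        + (a:ℚ)*((b:ℚ)*((b:ℚ)-(g:ℚ))*(2*(b:ℚ)-(g:ℚ))/6)
        + 2*(b:ℚ)^3*((a:ℚ)*((a:ℚ)-1)*(2*(a:ℚ)-1)/6)
        - 2*(a:ℚ)*(b:ℚ)^2*((b:ℚ)-1)*((a:ℚ)*((a:ℚ)-1)/2)
        + (a:ℚ)^2*(b:ℚ)*((b:ℚ)*((b:ℚ)-1)/2)
        - (a:ℚ)*(b:ℚ)*((b:ℚ)*((b:ℚ)-(g:ℚ))/2)
        - 2*(a:ℚ)*(b:ℚ)^2*((a:ℚ)*((g:ℚ)-1)/2) := by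
    linear_combination (a:ℚ)*k1 + k2 + (a:ℚ)*hR2 - (a:ℚ)*(b:ℚ)*hR1 - 2*(a:ℚ)*(b:ℚ)^2*hZ
  have final : Sab a b + ((b:ℚ)/(a:ℚ))*Sab b a
      = (3*(a:ℚ)^2*(b:ℚ) + 3*(a:ℚ)*(b:ℚ)^2 + (a:ℚ)^2 - 3*(a:ℚ)*(b:ℚ) + (b:ℚ)^2
          - 6*(a:ℚ)*(b:ℚ)*(g:ℚ) + (g:ℚ)^2)/(12*(a:ℚ)) := by
    have h2 : Sab a b + ((b:ℚ)/(a:ℚ))*Sab b a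
        = (2*(a:ℚ)^2*(b:ℚ)*Sab a b + 2*(a:ℚ)*(b:ℚ)^2*Sab b a)/(2*(a:ℚ)^2*(b:ℚ)) := by
      field_simp
    rw [h2, key]
    field_simp
    ring
  rw [eq_sub_iff_add_eq]
  exact final
end

section
/- Let a ≥ 0 and b ≥ 1 be integers and let g = gcd(a,b). Then Σ_{i=0}^{b−1} (a·i mod b) = b·(b − g)/2. -/
lemma per_shift (f : ℕ → ℕ) (n : ℕ) (hf : ∀ i, f (i + n) = f i) :
    ∀ c i, f (c * n + i) = f i := by
  intro c
  induction c with
  | zero => simp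
  | succ c ih =>
    intro i
    have : (c + 1) * n + i = (c * n + i) + n := by ring
    rw [this, hf, ih]

lemma sum_periodic (f : ℕ → ℕ) (n : ℕ) (hf : ∀ i, f (i + n) = f i) (c : ℕ) :
    ∑ i ∈ Finset.range (c * n), f i = c * ∑ i ∈ Finset.range n, f i := by
  induction c with
  | zero => simp
  | succ c ih =>
    rw [add_mul, one_mul, Finset.sum_range_add, ih, add_mul, one_mul]
    congr 1
    exact Finset.sum_congr rfl fun i _ => per_shift f n hf c i

lemma sum_coprime (a b : ℕ) (hb : 0 < b) (h : Nat.Coprime a b) :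
    ∑ i ∈ Finset.range b, (a * i % b) = ∑ i ∈ Finset.range b, i := by
  have hinj : Set.InjOn (fun i => a * i % b) (Finset.range b) := by
    intro i hi j hj hij
    simp only [Finset.coe_range, Set.mem_Iio] at hi hj
    have hm : a * i ≡ a * j [MOD b] := by
      simpa [Nat.ModEq] using hij
    have := Nat.ModEq.cancel_left_of_coprime (by rwa [Nat.Coprime, Nat.gcd_comm] at h) hm
    rwa [Nat.ModEq, Nat.mod_eq_of_lt hi, Nat.mod_eq_of_lt hj] at this
  have himg : (Finset.range b).image (fun i => a * i % b) = Finset.range b := by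
    apply Finset.eq_of_subset_of_card_le
    · intro x hx
      simp only [Finset.mem_image, Finset.mem_range] at hx ⊢
      obtain ⟨i, _, rfl⟩ := hx
      exact Nat.mod_lt _ hb
    · rw [Finset.card_image_of_injOn hinj]
  conv_rhs => rw [← himg]
  exact (Finset.sum_image (g := fun i => a * i % b) (f := id) (fun x hx y hy => hinj hx hy)).symm

/-- `Σ_{i=0}^{b−1} (a·i mod b) = b·(b − gcd(a,b))/2`. -/
theorem stmt2 (a b : ℕ) (hb : 1 ≤ b) :
    (∑ i ∈ Finset.range b, ((a * i % b : ℕ) : ℚ))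
      = (b : ℚ) * ((b : ℚ) - (Nat.gcd a b : ℚ)) / 2 := by
  set g := Nat.gcd a b with hg
  have hgpos : 0 < g := Nat.gcd_pos_of_pos_right a hb
  set a' := a / g with ha'
  set b' := b / g with hb'
  have hag : a = g * a' := (Nat.div_mul_cancel (Nat.gcd_dvd_left a b)).symm.trans (mul_comm _ _)
  have hbg : b = g * b' := (Nat.div_mul_cancel (Nat.gcd_dvd_right a b)).symm.trans (mul_comm _ _)
  have hb'pos : 0 < b' := Nat.div_pos (Nat.le_of_dvd hb (Nat.gcd_dvd_right a b)) hgpos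
  have hcop : Nat.Coprime a' b' := Nat.coprime_div_gcd_div_gcd hgpos
  have key : ∑ i ∈ Finset.range b, (a * i % b) = g * g * ∑ i ∈ Finset.range b', i := by
    have step1 : ∀ i, a * i % b = g * (a' * i % b') := by
      intro i
      rw [hag, hbg, mul_assoc, Nat.mul_mod_mul_left]
    have per : ∀ i, g * (a' * (i + b') % b') = g * (a' * i % b') := by
      intro i
      congr 1
      rw [mul_add, Nat.add_mul_mod_self_right]
    calc ∑ i ∈ Finset.range b, (a * i % b)
        = ∑ i ∈ Finset.range (g * b'), g * (a' * i % b') := by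
          rw [← hbg]; exact Finset.sum_congr rfl fun i _ => step1 i
      _ = g * ∑ i ∈ Finset.range b', g * (a' * i % b') :=
          sum_periodic _ b' per g
      _ = g * (g * ∑ i ∈ Finset.range b', (a' * i % b')) := by
          rw [← Finset.mul_sum]
      _ = g * g * ∑ i ∈ Finset.range b', i := by
          rw [sum_coprime a' b' hb'pos hcop, mul_assoc]
  have hsum : (∑ i ∈ Finset.range b', (i : ℚ)) = (b' : ℚ) * ((b' : ℚ) - 1) / 2 := by
    have h2 := Finset.sum_range_id_mul_two b'
    have hc : (((∑ i ∈ Finset.range b', i) * 2 : ℕ) : ℚ) = ((b' * (b' - 1) : ℕ) : ℚ) := by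
      rw [h2]
    push_cast [Nat.cast_sub hb'pos] at hc
    linarith
  have hbq : (b : ℚ) = (g : ℚ) * (b' : ℚ) := by exact_mod_cast congrArg (Nat.cast : ℕ → ℚ) hbg
  rw [← Nat.cast_sum, key]
  push_cast
  rw [hsum, hbq]
  ring
end

section
/- Let a ≥ 0 and b ≥ 1 be integers and let g = gcd(a,b). Then Σ_{i=0}^{b−1} (a·i mod b)² = b·(b − g)·(2b − g)/6. -/
open Finset

lemma sq_sum (m : ℕ) : ∑ j ∈ range m, (j : ℚ) ^ 2 = m * (m - 1) * (2 * m - 1) / 6 := by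
  induction m with
  | zero => simp
  | succ n ih =>
    rw [Finset.sum_range_succ, ih]
    push_cast
    ring

lemma rep_sum (g m : ℕ) (f : ℕ → ℚ) :
    ∑ i ∈ range (g * m), f (i % m) = g * ∑ j ∈ range m, f j := by
  induction g with
  | zero => simp
  | succ n ih =>
    rw [Nat.succ_mul, Finset.sum_range_add, ih]
    have : ∀ i ∈ range m, f ((n * m + i) % m) = f i := by
      intro i hi
      rw [Nat.add_comm, Nat.add_mul_mod_self_right, Nat.mod_eq_of_lt (Finset.mem_range.mp hi)]
    rw [Finset.sum_congr rfl this]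
    push_cast
    ring

lemma range_zmod (m : ℕ) [NeZero m] (S : ℕ → ℚ) :
    ∑ j ∈ range m, S j = ∑ x : ZMod m, S x.val := by
  refine (Finset.sum_nbij' (fun x : ZMod m => x.val) (fun j : ℕ => (j : ZMod m))
    (fun x _ => Finset.mem_range.mpr (ZMod.val_lt x)) (fun j _ => Finset.mem_univ _)
    (fun x _ => ZMod.natCast_rightInverse x) ?_ (fun x _ => rfl)).symm
  intro j hj
  exact ZMod.val_cast_of_lt (Finset.mem_range.mp hj)

lemma perm_sum (m a' : ℕ) [NeZero m] (h : Nat.Coprime a' m) (f : ℕ → ℚ) :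
    ∑ j ∈ range m, f (a' * j % m) = ∑ j ∈ range m, f j := by
  rw [range_zmod m f, range_zmod m (fun j => f (a' * j % m))]
  have : ∀ x : ZMod m, f (a' * x.val % m) = f (((a' : ZMod m) * x).val) := by
    intro x
    congr 1
    have : ((a' : ZMod m) * x) = ((a' * x.val : ℕ) : ZMod m) := by
      push_cast
      rw [ZMod.natCast_rightInverse x]
    rw [this, ZMod.val_natCast]
  simp_rw [this]
  let u : (ZMod m)ˣ := ZMod.unitOfCoprime a' h
  have hu : (u : ZMod m) = (a' : ZMod m) := rfl
  calc ∑ x : ZMod m, f (((a' : ZMod m) * x).val)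
      = ∑ x : ZMod m, f (((u : ZMod m) * x).val) := by rw [hu]
    _ = ∑ x : ZMod m, f x.val :=
        Fintype.sum_bijective _ u.mulLeft_bijective _ _ (fun x => rfl)

/-- `Σ_{i=0}^{b−1} (a·i mod b)² = b·(b − g)·(2b − g)/6` with `g = gcd(a,b)`. -/
theorem stmt3 (a b : ℕ) (hb : 1 ≤ b) :
    (∑ i ∈ Finset.range b, ((a * i % b : ℕ) : ℚ) ^ 2)
      = (b : ℚ) * ((b : ℚ) - (Nat.gcd a b : ℚ)) * (2 * (b : ℚ) - (Nat.gcd a b : ℚ)) / 6 := by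
  set g := Nat.gcd a b with hg
  have hgpos : 0 < g := Nat.gcd_pos_of_pos_right a hb
  set a' := a / g with ha'
  set m := b / g with hm
  have hbm : b = g * m := (Nat.mul_div_cancel' (Nat.gcd_dvd_right a b)).symm
  have haa : a = g * a' := by rw [ha', Nat.mul_div_cancel' (Nat.gcd_dvd_left a b)]
  have hmpos : 0 < m :=
    Nat.div_pos (Nat.le_of_dvd hb (Nat.gcd_dvd_right a b)) hgpos
  have : NeZero m := ⟨by omega⟩
  have hcop : Nat.Coprime a' m := Nat.coprime_div_gcd_div_gcd hgpos
  have hsummand : ∀ i, a * i % b = g * (a' * i % m) := by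
    intro i
    rw [haa, hbm, Nat.mul_assoc, Nat.mul_mod_mul_left]
  have hmod : ∀ i, a' * i % m = a' * (i % m) % m := by
    intro i; simp [Nat.mul_mod]
  calc (∑ i ∈ Finset.range b, ((a * i % b : ℕ) : ℚ) ^ 2)
      = ∑ i ∈ Finset.range (g * m),
          (fun j => ((g * (a' * j % m) : ℕ) : ℚ) ^ 2) (i % m) := by
        rw [hbm]
        refine Finset.sum_congr rfl fun i _ => ?_
        rw [← hbm]
        simp only [hsummand i, hmod i]
    _ = g * ∑ j ∈ Finset.range m, (fun j => ((g * (a' * j % m) : ℕ) : ℚ) ^ 2) j :=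
        rep_sum g m (fun j => ((g * (a' * j % m) : ℕ) : ℚ) ^ 2)
    _ = g * ∑ j ∈ Finset.range m, ((g * j : ℕ) : ℚ) ^ 2 := by
        have h := perm_sum m a' hcop (fun t => ((g * t : ℕ) : ℚ) ^ 2)
        simp only at h ⊢
        rw [h]
    _ = (b : ℚ) * ((b : ℚ) - (g : ℚ)) * (2 * (b : ℚ) - (g : ℚ)) / 6 := by
        have h2 := sq_sum m
        have : ∀ j ∈ Finset.range m, ((g * j : ℕ) : ℚ) ^ 2 = (g : ℚ)^2 * (j : ℚ)^2 := by
          intro j _; push_cast; ring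
        rw [Finset.sum_congr rfl this, ← Finset.mul_sum, h2, hbm]
        push_cast
        ring
end

section
/- Let a and b be positive integers. Then Σ_{i=0}^{b−1} Σ_{j=0}^{a−1} i·⌊i/b + j/a⌋ = Σ_{j=0}^{a−1} (1/2)·⌊b·j/a⌋·(2b − 1 − ⌊b·j/a⌋). -/
/-- `Σ_{i=0}^{b−1} Σ_{j=0}^{a−1} i·⌊i/b + j/a⌋
  = Σ_{j=0}^{a−1} (1/2)·⌊b·j/a⌋·(2b − 1 − ⌊b·j/a⌋)`. -/
theorem stmt6 (a b : ℕ) (ha : 0 < a) (hb : 0 < b) :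
    (∑ i ∈ Finset.range b, ∑ j ∈ Finset.range a,
        (i : ℚ) * ((⌊(i : ℚ) / (b : ℚ) + (j : ℚ) / (a : ℚ)⌋ : ℤ) : ℚ))
      = ∑ j ∈ Finset.range a,
          (1 / 2 : ℚ) * ((⌊((b : ℚ) * (j : ℚ)) / (a : ℚ)⌋ : ℤ) : ℚ)
            * (2 * (b : ℚ) - 1 - ((⌊((b : ℚ) * (j : ℚ)) / (a : ℚ)⌋ : ℤ) : ℚ)) := by
  rw [Finset.sum_comm]
  refine Finset.sum_congr rfl fun j hj => ?_
  rw [Finset.mem_range] at hj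
  set m : ℕ := b * j / a with hm
  have hma : m * a ≤ b * j := Nat.div_mul_le_self _ _
  have hlt : b * j < (m + 1) * a := by
    rw [← Nat.div_lt_iff_lt_mul ha]
    omega
  have hmb : m < b := by
    rw [hm, Nat.div_lt_iff_lt_mul ha]
    exact (Nat.mul_lt_mul_left hb).mpr hj
  have hfloor : (⌊((b : ℚ) * (j : ℚ)) / (a : ℚ)⌋ : ℤ) = (m : ℤ) := by
    rw [show ((b : ℚ) * (j : ℚ)) = ((b * j : ℕ) : ℚ) by push_cast; ring,
      Rat.floor_natCast_div_natCast]
    simp [hm, Int.natCast_div]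
  have hbq : (0 : ℚ) < (b : ℚ) := by exact_mod_cast hb
  have haq : (0 : ℚ) < (a : ℚ) := by exact_mod_cast ha
  have hfl : ∀ i ∈ Finset.range b,
      (i : ℚ) * ((⌊(i : ℚ) / (b : ℚ) + (j : ℚ) / (a : ℚ)⌋ : ℤ) : ℚ)
        = if b - m ≤ i then (i : ℚ) else 0 := by
    intro i hi
    rw [Finset.mem_range] at hi
    by_cases h : b - m ≤ i
    · have h1 : (1 : ℤ) = ⌊(i : ℚ) / (b : ℚ) + (j : ℚ) / (a : ℚ)⌋ := by
        rw [eq_comm, Int.floor_eq_iff]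
        constructor
        · rw [div_add_div _ _ (ne_of_gt hbq) (ne_of_gt haq), le_div_iff₀ (by positivity)]
          push_cast
          have : (b : ℚ) * a ≤ (i : ℚ) * a + (b : ℚ) * j := by
            have hia : b ≤ i + m := by omega
            have h2 : (b : ℚ) * a ≤ (i : ℚ) * a + (m : ℚ) * a := by
              have : ((b : ℕ) : ℚ) ≤ ((i + m : ℕ) : ℚ) := by exact_mod_cast hia
              push_cast at this
              nlinarith
            have h3 : ((m * a : ℕ) : ℚ) ≤ ((b * j : ℕ) : ℚ) := by exact_mod_cast hma
            push_cast at h3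
            linarith
          linarith [this]
        · have h1 : (i : ℚ) / b < 1 := by
            rw [div_lt_one hbq]; exact_mod_cast hi
          have h2 : (j : ℚ) / a < 1 := by
            rw [div_lt_one haq]; exact_mod_cast hj
          push_cast
          linarith
      rw [← h1]
      simp [h]
    · have h0 : (0 : ℤ) = ⌊(i : ℚ) / (b : ℚ) + (j : ℚ) / (a : ℚ)⌋ := by
        rw [eq_comm, Int.floor_eq_iff]
        constructor
        · push_cast; positivity
        · rw [div_add_div _ _ (ne_of_gt hbq) (ne_of_gt haq),
            show (((0 : ℤ) : ℚ)) + 1 = 1 by norm_num, div_lt_one (by positivity)]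
          push_cast
          have hia : i + m + 1 ≤ b := by omega
          have h2 : ((b * j : ℕ) : ℚ) < (((m + 1) * a : ℕ) : ℚ) := by exact_mod_cast hlt
          have h3 : ((i + m + 1 : ℕ) : ℚ) ≤ ((b : ℕ) : ℚ) := by exact_mod_cast hia
          push_cast at h2 h3
          nlinarith
      rw [← h0]
      simp [h]
  rw [Finset.sum_congr rfl hfl, ← Finset.sum_filter]
  have hfilter : Finset.filter (fun i => b - m ≤ i) (Finset.range b)
      = Finset.Ico (b - m) b := by
    ext x
    simp [Finset.mem_filter, Finset.mem_Ico, and_comm]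
  rw [hfilter, hfloor]
  have hbm : b - m + m = b := by omega
  rw [show Finset.Ico (b - m) b = Finset.Ico (b - m) (b - m + m) by rw [hbm],
    Finset.sum_Ico_eq_sum_range]
  simp only [Nat.add_sub_cancel_left]
  have hgauss : (∑ t ∈ Finset.range m, (t : ℚ)) = m * (m - 1) / 2 := by
    induction m with
    | zero => simp
    | succ n ih => rw [Finset.sum_range_succ, ih]; push_cast; ring
  have hcast : ((b - m : ℕ) : ℚ) = (b : ℚ) - m := by
    have := Nat.cast_sub (le_of_lt hmb) (R := ℚ)
    exact this
  push_cast [hcast]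
  rw [Finset.sum_add_distrib, hgauss, Finset.sum_const, Finset.card_range]
  push_cast
  ring
end

section
/- Let a and b be positive integers and let g = gcd(a,b). Then Σ_{i=0}^{b−1} ⌊a·i/b⌋·(⌊a·i/b⌋ + 1)/2 = a(b−1)(3b − a + 2ab)/(12b) − (b − g)/4 − (a/b)·S_{a,b} + (b − g)(2b − g)/(12b). -/
open Finset

lemma floorcast (m n : ℕ) (hn : 0 < n) :
    ((⌊(m : ℚ) / (n : ℚ)⌋ : ℚ)) = ((m : ℚ) - ((m % n : ℕ) : ℚ)) / (n : ℚ) := by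
  have hnq : (0 : ℚ) < n := by exact_mod_cast hn
  have hd : (m : ℚ) = n * ((m / n : ℕ) : ℚ) + ((m % n : ℕ) : ℚ) := by
    exact_mod_cast congrArg (Nat.cast : ℕ → ℚ) (Nat.div_add_mod m n).symm
  have hr : ((m % n : ℕ) : ℚ) < n := by exact_mod_cast Nat.mod_lt _ hn
  have hr0 : (0:ℚ) ≤ ((m % n : ℕ) : ℚ) := by positivity
  have h : ⌊(m : ℚ) / (n : ℚ)⌋ = ((m / n : ℕ) : ℤ) := by
    rw [Int.floor_eq_iff]
    refine ⟨?_, ?_⟩ <;> rw [Int.cast_natCast]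
    · rw [le_div_iff₀ hnq]; nlinarith
    · rw [div_lt_iff₀ hnq]; nlinarith
  rw [h, Int.cast_natCast]
  field_simp
  linarith

lemma sum_mod_range (f : ℕ → ℚ) (m n : ℕ) :
    ∑ i ∈ range (m * n), f (i % n) = m * ∑ k ∈ range n, f k := by
  induction m with
  | zero => simp
  | succ m ih =>
    rw [Nat.succ_mul, Finset.sum_range_add, ih]
    have h : ∀ i ∈ range n, f ((m * n + i) % n) = f i := by
      intro i hi
      simp [Nat.add_mod, Nat.mul_mod_left, Nat.mod_eq_of_lt (mem_range.mp hi)]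
    rw [Finset.sum_congr rfl h]
    push_cast; ring

lemma sum_coprime_s7 (f : ℕ → ℚ) (c m : ℕ) (hc : Nat.Coprime c m) :
    ∑ i ∈ range m, f (c * i % m) = ∑ i ∈ range m, f i := by
  rcases Nat.eq_zero_or_pos m with rfl | hm
  · simp
  have hinj : Set.InjOn (fun i => c * i % m) (range m) := by
    intro i hi j hj h
    simp only [mem_coe, mem_range] at hi hj
    have : i ≡ j [MOD m] :=
      Nat.ModEq.cancel_left_of_coprime hc.symm (by simpa [Nat.ModEq] using h)
    simpa [Nat.ModEq, Nat.mod_eq_of_lt hi, Nat.mod_eq_of_lt hj] using this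
  have himg : (range m).image (fun i => c * i % m) = range m := by
    apply Finset.eq_of_subset_of_card_le
    · intro x hx
      simp only [mem_image, mem_range] at hx ⊢
      obtain ⟨i, _, rfl⟩ := hx
      exact Nat.mod_lt _ hm
    · rw [Finset.card_image_of_injOn hinj]
  calc ∑ i ∈ range m, f (c * i % m)
      = ∑ j ∈ (range m).image (fun i => c * i % m), f j :=
        (Finset.sum_image (fun x hx y hy h => hinj hx hy h)).symm
    _ = ∑ i ∈ range m, f i := by rw [himg]

lemma sum_reduce (a b : ℕ) (ha : 0 < a) (hb : 0 < b) (f : ℕ → ℚ) :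
    ∑ i ∈ range b, f (a * i % b)
      = (Nat.gcd a b : ℚ) * ∑ k ∈ range (b / Nat.gcd a b), f (Nat.gcd a b * k) := by
  set g := Nat.gcd a b with hg
  have hgpos : 0 < g := Nat.gcd_pos_of_pos_left _ ha
  have hbd : g ∣ b := Nat.gcd_dvd_right a b
  have had : g ∣ a := Nat.gcd_dvd_left a b
  set b' := b / g with hb'
  set a' := a / g with ha'
  have hbeq : b = g * b' := (Nat.mul_div_cancel' hbd).symm
  have haeq : a = g * a' := (Nat.mul_div_cancel' had).symm
  have hcop : Nat.Coprime a' b' := Nat.coprime_div_gcd_div_gcd hgpos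
  have hstep : ∀ i, a * i % b = g * (a' * (i % b') % b') := by
    intro i
    rw [hbeq, haeq, mul_assoc, Nat.mul_mod_mul_left]
    congr 1
    exact ((Nat.mod_modEq i b').mul_left a').symm
  calc ∑ i ∈ range b, f (a * i % b)
      = ∑ i ∈ range (g * b'), (fun k => f (g * (a' * k % b'))) (i % b') := by
        rw [← hbeq]; exact Finset.sum_congr rfl fun i _ => by rw [hstep i]
    _ = (g : ℚ) * ∑ k ∈ range b', f (g * (a' * k % b')) := by
        rw [show (∑ i ∈ range (g * b'), (fun k => f (g * (a' * k % b'))) (i % b'))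
              = (g:ℚ) * ∑ k ∈ range b', (fun k => f (g * (a' * k % b'))) k from
            sum_mod_range (fun k => f (g * (a' * k % b'))) g b']
    _ = (g : ℚ) * ∑ k ∈ range b', f (g * k) := by
        rw [sum_coprime_s7 (fun x => f (g * x)) a' b' hcop]

lemma sumid (n : ℕ) : ∑ k ∈ range n, (k : ℚ) = (n : ℚ) * ((n : ℚ) - 1) / 2 := by
  induction n with
  | zero => simp
  | succ n ih => rw [Finset.sum_range_succ, ih]; push_cast; ring

lemma sumsq (n : ℕ) : ∑ k ∈ range n, (k : ℚ)^2
    = (n : ℚ) * ((n : ℚ) - 1) * (2 * (n : ℚ) - 1) / 6 := by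
  induction n with
  | zero => simp
  | succ n ih => rw [Finset.sum_range_succ, ih]; push_cast; ring

/-- `Σ_{i=0}^{b−1} ⌊a·i/b⌋(⌊a·i/b⌋+1)/2
  = a(b−1)(3b − a + 2ab)/(12b) − (b−g)/4 − (a/b)·S_{a,b} + (b−g)(2b−g)/(12b)`
with `g = gcd(a,b)`. -/
theorem stmt7 (a b : ℕ) (ha : 0 < a) (hb : 0 < b) :
    (∑ i ∈ Finset.range b,
        ((⌊((a : ℚ) * (i : ℚ)) / (b : ℚ)⌋ : ℚ) * ((⌊((a : ℚ) * (i : ℚ)) / (b : ℚ)⌋ : ℚ) + 1)) / 2)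
      = (a : ℚ) * ((b : ℚ) - 1) * (3 * (b : ℚ) - (a : ℚ) + 2 * (a : ℚ) * (b : ℚ)) / (12 * (b : ℚ))
        - ((b : ℚ) - (Nat.gcd a b : ℚ)) / 4
        - ((a : ℚ) / (b : ℚ)) * Sab a b
        + ((b : ℚ) - (Nat.gcd a b : ℚ)) * (2 * (b : ℚ) - (Nat.gcd a b : ℚ)) / (12 * (b : ℚ)) := by
  set g := Nat.gcd a b with hg
  have hgpos : 0 < g := Nat.gcd_pos_of_pos_left _ ha
  set b' := b / g with hb'
  have hbeq : b = g * b' := (Nat.mul_div_cancel' (Nat.gcd_dvd_right a b)).symm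
  have hbq : (0:ℚ) < b := by exact_mod_cast hb
  have hgq : (0:ℚ) < g := by exact_mod_cast hgpos
  have hbcast : (b:ℚ) = (g:ℚ) * (b':ℚ) := by exact_mod_cast congrArg (Nat.cast : ℕ → ℚ) hbeq
  -- S1
  have S1 : ∑ i ∈ range b, ((a * i % b : ℕ) : ℚ) = (b:ℚ) * ((b:ℚ) - (g:ℚ)) / 2 := by
    rw [sum_reduce a b ha hb (fun x => (x:ℚ)), ← hg, ← hb']
    have : ∑ k ∈ range b', ((g * k : ℕ) : ℚ) = (g:ℚ) * ∑ k ∈ range b', (k:ℚ) := by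
      rw [Finset.mul_sum]; exact Finset.sum_congr rfl fun k _ => by push_cast; ring
    rw [this, sumid, hbcast]
    ring
  -- S2
  have S2 : ∑ i ∈ range b, ((a * i % b : ℕ) : ℚ)^2
      = (b:ℚ) * ((b:ℚ) - (g:ℚ)) * (2*(b:ℚ) - (g:ℚ)) / 6 := by
    rw [sum_reduce a b ha hb (fun x => (x:ℚ)^2), ← hg, ← hb']
    have : ∑ k ∈ range b', ((g * k : ℕ) : ℚ)^2 = (g:ℚ)^2 * ∑ k ∈ range b', (k:ℚ)^2 := by
      rw [Finset.mul_sum]; exact Finset.sum_congr rfl fun k _ => by push_cast; ring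
    rw [this, sumsq, hbcast]
    ring
  -- Sab relation
  have S3 : ∑ i ∈ range b, (i:ℚ) * ((a * i % b : ℕ) : ℚ) = (b:ℚ) * Sab a b := by
    rw [Sab, Finset.mul_sum]
    refine Finset.sum_congr rfl fun i _ => ?_
    field_simp
  -- per-term expansion
  have hterm : ∀ i ∈ range b,
      ((⌊((a : ℚ) * (i : ℚ)) / (b : ℚ)⌋ : ℚ) * ((⌊((a : ℚ) * (i : ℚ)) / (b : ℚ)⌋ : ℚ) + 1)) / 2
        = (a:ℚ)^2/(2*(b:ℚ)^2) * (i:ℚ)^2 - (a:ℚ)/((b:ℚ)^2) * ((i:ℚ) * ((a * i % b : ℕ) : ℚ))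
          + 1/(2*(b:ℚ)^2) * ((a * i % b : ℕ) : ℚ)^2
          + (a:ℚ)/(2*(b:ℚ)) * (i:ℚ) - 1/(2*(b:ℚ)) * ((a * i % b : ℕ) : ℚ) := by
    intro i _
    have hAi : ((a:ℚ) * (i:ℚ)) = ((a * i : ℕ) : ℚ) := by push_cast; ring
    rw [hAi, floorcast (a*i) b hb]
    have : ((a * i : ℕ) : ℚ) = (a:ℚ) * (i:ℚ) := by push_cast; ring
    rw [this]
    field_simp
    ring
  rw [Finset.sum_congr rfl hterm]
  simp only [Finset.sum_sub_distrib, Finset.sum_add_distrib, ← Finset.mul_sum]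
  rw [sumid, sumsq, S1, S2, S3]
  field_simp
  ring
end

section
/- Let d ≥ 1, let f : ℝ^d → ℝ be a bounded Lebesgue-measurable function with compact support, let s ∈ ℤ^d be a nonzero integer vector, and let n ≥ 1 be an integer. Then Σ_{x ∈ ℤ^d} ∫_0^1 f(x + λ·n·s) dλ = Σ_{x ∈ ℤ^d} ∫_0^1 f(x + λ·s) dλ (both sums have only finitely many nonzero terms). In particular, the lattice bond sum Σ_{x ∈ ℤ^d} ∫_0^1 f(x + λr) dλ associated with a nonzero direction r ∈ ℤ^d is unchanged when r is replaced by r/gcd(r_1,…,r_d). -/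
set_option maxHeartbeats 1000000

open MeasureTheory Metric

section Aux
variable {d : ℕ}

private noncomputable def FF (f : (Fin d → ℝ) → ℝ) (v : Fin d → ℝ) (x : Fin d → ℤ) : ℝ :=
  ∫ t in (0:ℝ)..1, f (fun i => (x i : ℝ) + t * v i)

private lemma FF_finite_support (f : (Fin d → ℝ) → ℝ) (hsupp : HasCompactSupport f)
    (v : Fin d → ℝ) : {x : Fin d → ℤ | FF f v x ≠ 0}.Finite := by
  obtain ⟨R, hR⟩ := (isBounded_iff_subset_closedBall 0).1 hsupp.isCompact.isBounded
  set M : ℤ := ⌈R + ‖v‖⌉ with hM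
  have hsub : {x : Fin d → ℤ | FF f v x ≠ 0} ⊆ Set.pi Set.univ (fun _ => Set.Icc (-M) M) := by
    intro x hx
    simp only [Set.mem_pi, Set.mem_univ, Set.mem_Icc, forall_true_left]
    intro i
    by_contra hcon
    apply hx
    have hxi : (M : ℝ) < |(x i : ℝ)| := by
      rw [not_and_or, not_le, not_le] at hcon
      rcases hcon with h | h
      · have : (x i : ℝ) < -(M:ℝ) := by exact_mod_cast h
        calc (M:ℝ) < -(x i : ℝ) := by linarith
          _ ≤ |(x i : ℝ)| := neg_le_abs _
      · have : (M:ℝ) < (x i : ℝ) := by exact_mod_cast h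
        exact lt_of_lt_of_le this (le_abs_self _)
    have hzero : ∀ t ∈ Set.uIcc (0:ℝ) 1,
        f (fun i => (x i : ℝ) + t * v i) = (0 : ℝ) := by
      intro t ht
      rw [Set.uIcc_of_le (by norm_num : (0:ℝ) ≤ 1)] at ht
      apply image_eq_zero_of_notMem_tsupport
      intro hmem
      have h1 : ‖(fun i => (x i : ℝ) + t * v i : Fin d → ℝ)‖ ≤ R := by
        have := hR hmem; simpa [mem_closedBall, dist_zero_right] using this
      have h2 : |(x i : ℝ) + t * v i| ≤ R :=
        le_trans (norm_le_pi_norm (fun i => (x i : ℝ) + t * v i) i) h1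
      have h3 : |v i| ≤ ‖v‖ := norm_le_pi_norm v i
      have h4 : |t * v i| ≤ ‖v‖ := by
        rw [abs_mul]
        calc |t| * |v i| ≤ 1 * ‖v‖ := by
              apply mul_le_mul _ h3 (abs_nonneg _) zero_le_one
              rw [abs_le]; constructor <;> linarith [ht.1, ht.2]
          _ = ‖v‖ := one_mul _
      have h5 : |(x i : ℝ)| ≤ R + ‖v‖ := by
        calc |(x i : ℝ)| = |((x i : ℝ) + t * v i) - t * v i| := by ring_nf
          _ ≤ |(x i : ℝ) + t * v i| + |t * v i| := abs_sub _ _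
          _ ≤ R + ‖v‖ := add_le_add h2 h4
      have h6 : R + ‖v‖ ≤ (M : ℝ) := Int.le_ceil _
      linarith
    unfold FF
    rw [intervalIntegral.integral_congr hzero]
    simp
  exact Set.Finite.subset (Set.Finite.pi (fun _ => Set.finite_Icc _ _)) hsub

private lemma g_intervalIntegrable (f : (Fin d → ℝ) → ℝ) (hmeas : Measurable f)
    (C : ℝ) (hbd : ∀ y, |f y| ≤ C) (x : Fin d → ℤ) (s : Fin d → ℤ) (a b : ℝ) :
    IntervalIntegrable (fun u => f (fun i => (x i : ℝ) + u * (s i : ℝ))) volume a b := by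
  have hg : Measurable (fun u : ℝ => f (fun i => (x i : ℝ) + u * (s i : ℝ))) := by
    apply hmeas.comp
    exact measurable_pi_lambda _ fun i => measurable_const.add (measurable_id.mul_const _)
  constructor <;>
  · refine Integrable.mono' (g := fun _ => C)
      (integrableOn_const measure_Ioc_lt_top.ne)
      hg.aestronglyMeasurable.restrict (ae_of_all _ fun t => ?_)
    simpa [Real.norm_eq_abs] using hbd _

private lemma FF_scale (f : (Fin d → ℝ) → ℝ) (hmeas : Measurable f)
    (C : ℝ) (hbd : ∀ y, |f y| ≤ C) (s : Fin d → ℤ) (n : ℕ) (hn : 1 ≤ n) (x : Fin d → ℤ) :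
    FF f (fun i => (n : ℝ) * (s i : ℝ)) x
      = (n : ℝ)⁻¹ * ∑ k ∈ Finset.range n,
          FF f (fun i => (s i : ℝ)) (fun i => x i + (k : ℤ) * s i) := by
  set g : ℝ → ℝ := fun u => f (fun i => (x i : ℝ) + u * (s i : ℝ)) with hgdef
  have hn0 : (n : ℝ) ≠ 0 := Nat.cast_ne_zero.2 (by omega)
  have h1 : FF f (fun i => (n : ℝ) * (s i : ℝ)) x = ∫ t in (0:ℝ)..1, g ((n : ℝ) * t) := by
    unfold FF
    apply intervalIntegral.integral_congr
    intro t _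
    simp only [hgdef]
    congr 1
    funext i
    ring
  have h2 : (∫ t in (0:ℝ)..1, g ((n : ℝ) * t)) = (n : ℝ)⁻¹ • ∫ u in (0:ℝ)..(n:ℝ), g u := by
    rw [intervalIntegral.integral_comp_mul_left g hn0]
    norm_num
  have h3 : (∫ u in (0:ℝ)..(n:ℝ), g u)
      = ∑ k ∈ Finset.range n, ∫ u in ((k:ℕ):ℝ)..(((k+1:ℕ)):ℝ), g u := by
    rw [intervalIntegral.sum_integral_adjacent_intervals (a := fun k : ℕ => (k : ℝ))
      (fun k _ => g_intervalIntegrable f hmeas C hbd x s _ _)]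
    norm_num
    rfl
  have h4 : ∀ k : ℕ, (∫ u in ((k:ℕ):ℝ)..(((k+1:ℕ)):ℝ), g u)
      = FF f (fun i => (s i : ℝ)) (fun i => x i + (k : ℤ) * s i) := by
    intro k
    unfold FF
    have := intervalIntegral.integral_comp_add_right (a := (0:ℝ)) (b := 1) g (k : ℝ)
    rw [show ((0:ℝ) + (k:ℝ)) = ((k:ℕ):ℝ) by norm_num,
        show ((1:ℝ) + (k:ℝ)) = (((k+1:ℕ)):ℝ) by push_cast; ring] at this
    rw [← this]
    apply intervalIntegral.integral_congr
    intro t _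
    simp only [hgdef]
    congr 1
    funext i
    push_cast
    ring
  rw [h1, h2, h3, Finset.sum_congr rfl fun k _ => h4 k, smul_eq_mul]

end Aux

/-- Scaling invariance of lattice bond sums: for a bounded measurable compactly supported
`f : ℝ^d → ℝ`, a nonzero direction `s ∈ ℤ^d` and an integer `n ≥ 1`, both bond sums have
finitely many nonzero terms and
`Σ_{x ∈ ℤ^d} ∫_0^1 f(x + λ·n·s) dλ = Σ_{x ∈ ℤ^d} ∫_0^1 f(x + λ·s) dλ`.
In particular the bond sum for a direction `r` is unchanged when `r` is replaced by
`r / gcd(r_1,…,r_d)`. -/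
theorem stmt9 (d : ℕ) (hd : 1 ≤ d) (f : (Fin d → ℝ) → ℝ)
    (hmeas : Measurable f) (C : ℝ) (hbd : ∀ y, |f y| ≤ C)
    (hsupp : HasCompactSupport f)
    (s : Fin d → ℤ) (hs : s ≠ 0) (n : ℕ) (hn : 1 ≤ n) :
    {x : Fin d → ℤ |
        (∫ t in (0:ℝ)..1, f (fun i => (x i : ℝ) + t * ((n : ℝ) * (s i : ℝ)))) ≠ 0}.Finite
    ∧ {x : Fin d → ℤ |
        (∫ t in (0:ℝ)..1, f (fun i => (x i : ℝ) + t * (s i : ℝ))) ≠ 0}.Finite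
    ∧ (∑' x : Fin d → ℤ, ∫ t in (0:ℝ)..1, f (fun i => (x i : ℝ) + t * ((n : ℝ) * (s i : ℝ))))
      = ∑' x : Fin d → ℤ, ∫ t in (0:ℝ)..1, f (fun i => (x i : ℝ) + t * (s i : ℝ)) := by
  refine ⟨FF_finite_support f hsupp (fun i => (n : ℝ) * (s i : ℝ)),
    FF_finite_support f hsupp (fun i => (s i : ℝ)), ?_⟩
  have hn0 : (n : ℝ) ≠ 0 := Nat.cast_ne_zero.2 (by omega)
  have hsum : Summable (FF f (fun i => (s i : ℝ))) :=
    summable_of_ne_finset_zero (s := (FF_finite_support f hsupp _).toFinset)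
      (fun b hb => by simpa using hb)
  have hsum' : ∀ k : ℕ, Summable (fun x : Fin d → ℤ =>
      FF f (fun i => (s i : ℝ)) (x + fun i => (k : ℤ) * s i)) := fun k =>
    (Equiv.addRight (fun i => (k : ℤ) * s i)).summable_iff.2 hsum
  show (∑' x : Fin d → ℤ, FF f (fun i => (n : ℝ) * (s i : ℝ)) x)
      = ∑' x : Fin d → ℤ, FF f (fun i => (s i : ℝ)) x
  calc (∑' x : Fin d → ℤ, FF f (fun i => (n : ℝ) * (s i : ℝ)) x)
      = ∑' x : Fin d → ℤ, (n : ℝ)⁻¹ * ∑ k ∈ Finset.range n,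
          FF f (fun i => (s i : ℝ)) (x + fun i => (k : ℤ) * s i) :=
        tsum_congr fun x => FF_scale f hmeas C hbd s n hn x
    _ = (n : ℝ)⁻¹ * ∑' x : Fin d → ℤ, ∑ k ∈ Finset.range n,
          FF f (fun i => (s i : ℝ)) (x + fun i => (k : ℤ) * s i) := tsum_mul_left
    _ = (n : ℝ)⁻¹ * ∑ k ∈ Finset.range n, ∑' x : Fin d → ℤ,
          FF f (fun i => (s i : ℝ)) (x + fun i => (k : ℤ) * s i) := by
        rw [Summable.tsum_finsetSum (fun k _ => hsum' k)]
    _ = (n : ℝ)⁻¹ * ∑ k ∈ Finset.range n, ∑' x : Fin d → ℤ,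
          FF f (fun i => (s i : ℝ)) x := by
        congr 1
        exact Finset.sum_congr rfl fun k _ =>
          (Equiv.addRight (fun i => (k : ℤ) * s i)).tsum_eq (FF f (fun i => (s i : ℝ)))
    _ = ∑' x : Fin d → ℤ, FF f (fun i => (s i : ℝ)) x := by
        rw [Finset.sum_const, Finset.card_range, nsmul_eq_mul]
        field_simp
end

section
/- Let d ≥ 1, let R ⊂ ℤ^d \ {0} be a finite set of bond directions, let L ⊂ ℤ^d be a finite set of lattice sites, and let F be a real d×d matrix. Let φ : ℝ^d → ℝ be differentiable at F·r for every r ∈ R, and define the atomistic energy E(y) := Σ_{x ∈ L} Σ_{r ∈ R, x+r ∈ L} φ(y(x+r) − y(x)) for maps y : ℤ^d → ℝ^d. Let y_F(x) := F·x be the uniform deformation, and let v : ℤ^d → ℝ^d be a displacement such that v(x) = 0 for every x ∈ L for which there exists r ∈ R with x + r ∉ L or x − r ∉ L. Then the function α ↦ E(y_F + α·v) is differentiable at α = 0 with derivative 0; i.e., the uniform deformation y_F is an equilibrium of the atomistic model with respect to all such admissible displacements. -/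
open Finset

/-- The uniform deformation `y_F(x) = F·x` is an equilibrium of the atomistic two-body
model `E(y) = Σ_{x ∈ L} Σ_{r ∈ R, x+r ∈ L} φ(y(x+r) − y(x))`: for every displacement `v`
vanishing at all sites `x ∈ L` having a neighbor direction `r ∈ R` with `x + r ∉ L` or
`x − r ∉ L`, the function `α ↦ E(y_F + α·v)` is differentiable at `α = 0` with
derivative `0`. -/
theorem stmt17 (d : ℕ) (hd : 1 ≤ d) (R L : Finset (Fin d → ℤ))
    (hR : ∀ r ∈ R, r ≠ 0)
    (F : Matrix (Fin d) (Fin d) ℝ) (φ : (Fin d → ℝ) → ℝ)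
    (hφ : ∀ r ∈ R, DifferentiableAt ℝ φ (F.mulVec fun i => (r i : ℝ)))
    (v : (Fin d → ℤ) → (Fin d → ℝ))
    (hv : ∀ x ∈ L, (∃ r ∈ R, x + r ∉ L ∨ x - r ∉ L) → v x = 0) :
    HasDerivAt (fun α : ℝ =>
        ∑ x ∈ L, ∑ r ∈ R.filter (fun r => x + r ∈ L),
          φ (((F.mulVec fun i => ((x + r) i : ℝ)) + α • v (x + r))
              - ((F.mulVec fun i => (x i : ℝ)) + α • v x)))
      0 0 := by
  classical
  set r' : (Fin d → ℤ) → (Fin d → ℝ) := fun r i => (r i : ℝ) with hr'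
  have hmul : ∀ x r : Fin d → ℤ,
      F.mulVec (r' (x + r)) = F.mulVec (r' x) + F.mulVec (r' r) := by
    intro x r
    have : r' (x + r) = r' x + r' r := by
      funext i; simp [r', Pi.add_apply]
    rw [this, Matrix.mulVec_add]
  set D : (Fin d → ℤ) → ((Fin d → ℝ) →L[ℝ] ℝ) := fun r => fderiv ℝ φ (F.mulVec (r' r)) with hD
  have key : ∀ x ∈ L, ∀ r ∈ R.filter (fun r => x + r ∈ L),
      HasDerivAt (fun α : ℝ =>
          φ ((F.mulVec (r' (x + r)) + α • v (x + r)) - (F.mulVec (r' x) + α • v x)))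
        (D r (v (x + r) - v x)) 0 := by
    intro x hx r hr
    have hrR : r ∈ R := (mem_filter.mp hr).1
    have hline : HasDerivAt (fun α : ℝ =>
        (F.mulVec (r' (x + r)) + α • v (x + r)) - (F.mulVec (r' x) + α • v x))
        (v (x + r) - v x) 0 := by
      have h1 : HasDerivAt (fun α : ℝ => F.mulVec (r' (x + r)) + α • v (x + r)) (v (x + r)) 0 := by
        simpa using ((hasDerivAt_id (0 : ℝ)).smul_const (v (x + r))).const_add
          (F.mulVec (r' (x + r)))
      have h2 : HasDerivAt (fun α : ℝ => F.mulVec (r' x) + α • v x) (v x) 0 := by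
        simpa using ((hasDerivAt_id (0 : ℝ)).smul_const (v x)).const_add (F.mulVec (r' x))
      exact h1.sub h2
    have hpt : F.mulVec (r' r) =
        (F.mulVec (r' (x + r)) + (0 : ℝ) • v (x + r)) - (F.mulVec (r' x) + (0 : ℝ) • v x) := by
      simp [hmul x r]
    have hF : HasFDerivAt φ (D r) (F.mulVec (r' r)) := (hφ r hrR).hasFDerivAt
    rw [hpt] at hF
    exact hF.comp_hasDerivAt 0 hline
  have hsum := HasDerivAt.sum (fun x hx =>
    HasDerivAt.sum (fun r hr => key x hx r hr))
  have hS : ∑ x ∈ L, ∑ r ∈ R.filter (fun r => x + r ∈ L), D r (v (x + r) - v x) = 0 := by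
    simp only [Finset.sum_filter]
    rw [Finset.sum_comm]
    apply Finset.sum_eq_zero
    intro r hrR
    rw [← Finset.sum_filter]
    have split : ∑ x ∈ L.filter (fun x => x + r ∈ L), D r (v (x + r) - v x)
        = (∑ x ∈ L.filter (fun x => x + r ∈ L), D r (v (x + r)))
          - ∑ x ∈ L.filter (fun x => x + r ∈ L), D r (v x) := by
      rw [← Finset.sum_sub_distrib]
      exact Finset.sum_congr rfl fun x _ => by rw [map_sub]
    rw [split]
    have hA : ∑ x ∈ L.filter (fun x => x + r ∈ L), D r (v x) = ∑ x ∈ L, D r (v x) := by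
      apply Finset.sum_subset (Finset.filter_subset _ _)
      intro x hx hnx
      have : x + r ∉ L := fun h => hnx (Finset.mem_filter.mpr ⟨hx, h⟩)
      rw [hv x hx ⟨r, hrR, Or.inl this⟩, map_zero]
    have hB : ∑ x ∈ L.filter (fun x => x + r ∈ L), D r (v (x + r))
        = ∑ z ∈ L.filter (fun z => z - r ∈ L), D r (v z) := by
      apply Finset.sum_nbij' (fun x => x + r) (fun z => z - r)
      · intro x hx
        rcases Finset.mem_filter.mp hx with ⟨h1, h2⟩
        exact Finset.mem_filter.mpr ⟨h2, by simpa using h1⟩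
      · intro z hz
        rcases Finset.mem_filter.mp hz with ⟨h1, h2⟩
        exact Finset.mem_filter.mpr ⟨h2, by simpa using h1⟩
      · intro x _; simp
      · intro z _; simp
      · intro x _; rfl
    have hC : ∑ z ∈ L.filter (fun z => z - r ∈ L), D r (v z) = ∑ z ∈ L, D r (v z) := by
      apply Finset.sum_subset (Finset.filter_subset _ _)
      intro z hz hnz
      have : z - r ∉ L := fun h => hnz (Finset.mem_filter.mpr ⟨hz, h⟩)
      rw [hv z hz ⟨r, hrR, Or.inr this⟩, map_zero]
    rw [hB, hC, hA, sub_self]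
  rw [hS] at hsum
  simp only [Finset.sum_fn] at hsum
  exact hsum
end
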